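/- Let Φ : (0,∞) → (0,∞) be nondecreasing, suppose there exist α ∈ (0,2], C₁ > 0 and λ₀ > 0 such that Φ(λ) ≥ C₁ λ^{α/2} for all 0 < λ < λ₀, and suppose Φ(λ)/log λ → ∞ as λ → ∞. Then for every γ > 0 and every t₀ > 0 there exists a constant C̃ = C̃(γ, t₀, Φ) > 0 such that for all t ≥ t₀ and every Borel measure η on (0,∞) with ∫_{(0,∞)} e^{-λu} η(du) = e^{-tΦ(λ)} for all λ > 0, one has ∫_{(0,∞)} u^{-γ} η(du) ≤ C̃ t^{-2γ/α}. -/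

import Mathlib

open MeasureTheory Filter Set Topology

/-- Gamma representation of `u^{-γ}`. -/
lemma my_gammaRep {γ : ℝ} (hγ : 0 < γ) {u : ℝ} (hu : 0 < u) :
    ENNReal.ofReal (Real.Gamma γ) * ENNReal.ofReal (u ^ (-γ)) =
      ∫⁻ l in Set.Ioi (0:ℝ), ENNReal.ofReal (l ^ (γ - 1) * Real.exp (-l * u)) := by
  have hint : IntegrableOn (fun l : ℝ => l ^ (γ - 1) * Real.exp (-l * u)) (Set.Ioi 0) := by
    have h := integrableOn_rpow_mul_exp_neg_mul_rpow (by linarith : (-1:ℝ) < γ - 1) (by norm_num : (0:ℝ) < 1) hu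
    refine h.congr_fun (fun x hx => ?_) measurableSet_Ioi
    simp only [Real.rpow_one]; ring_nf
  have hval : (∫ l in Set.Ioi (0:ℝ), l ^ (γ - 1) * Real.exp (-l * u))
      = (1/u) ^ γ * Real.Gamma γ := by
    rw [← Real.integral_rpow_mul_exp_neg_mul_Ioi hγ hu]
    refine setIntegral_congr_fun measurableSet_Ioi fun x hx => ?_
    ring_nf
  have hnn : 0 ≤ᵐ[volume.restrict (Set.Ioi (0:ℝ))]
      fun l : ℝ => l ^ (γ - 1) * Real.exp (-l * u) := by
    filter_upwards [ae_restrict_mem measurableSet_Ioi] with x hx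
    have : (0:ℝ) < x := hx
    positivity
  rw [← ofReal_integral_eq_lintegral_ofReal hint hnn, hval,
    ← ENNReal.ofReal_mul (Real.Gamma_nonneg_of_nonneg hγ.le)]
  congr 1
  rw [one_div, Real.inv_rpow hu.le, ← Real.rpow_neg hu.le]
  ring

/-- exp decay beats any power on `[t₀, ∞)`. -/
lemma my_expPolyBound {c q t₀ : ℝ} (hc : 0 < c) (hq : 0 < q) (ht₀ : 0 < t₀) :
    ∃ D > 0, ∀ t ≥ t₀, Real.exp (-(c * t)) ≤ D * t ^ (-q) := by
  have h0 := tendsto_rpow_mul_exp_neg_mul_atTop_nhds_zero q c hc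
  obtain ⟨T, hT⟩ := eventually_atTop.mp (h0.eventually_le_const one_pos)
  set T' := max T t₀ with hT'
  have hcont : ContinuousOn (fun x : ℝ => x ^ q * Real.exp (-c * x)) (Set.Icc t₀ T') := by
    apply ContinuousOn.mul
    · exact continuousOn_id.rpow_const fun x _ => Or.inr hq.le
    · exact (Real.continuous_exp.comp (continuous_const.mul continuous_id)).continuousOn
  obtain ⟨x₀, hx₀, hmax⟩ := isCompact_Icc.exists_isMaxOn
    ⟨t₀, le_refl t₀, le_max_right _ _⟩ hcont
  set D := max (x₀ ^ q * Real.exp (-c * x₀)) 1 + 1 with hD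
  have hDpos : 0 < D := by positivity
  refine ⟨D, hDpos, fun t ht => ?_⟩
  have htpos : 0 < t := lt_of_lt_of_le ht₀ ht
  have hbound : t ^ q * Real.exp (-c * t) ≤ D := by
    rcases le_or_gt t T' with h | h
    · exact le_trans (hmax ⟨ht, h⟩) (by simp only []; rw [hD]; linarith [le_max_left (x₀ ^ q * Real.exp (-c * x₀)) (1:ℝ)])
    · have := hT t (le_trans (le_max_left _ _) h.le)
      calc t ^ q * Real.exp (-c * t) ≤ 1 := this
        _ ≤ D := by rw [hD]; linarith [le_max_right (x₀ ^ q * Real.exp (-c * x₀)) (1:ℝ)]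
  have htq : (0:ℝ) < t ^ q := Real.rpow_pos_of_pos htpos q
  rw [Real.rpow_neg htpos.le]
  rw [show (-(c*t)) = -c*t by ring, ← div_eq_mul_inv, le_div_iff₀ htq]
  calc Real.exp (-c*t) * t ^ q = t ^ q * Real.exp (-c*t) := by ring
    _ ≤ D := hbound

/-- sigma-finiteness of a measure with finite Laplace transform. -/
lemma my_sigmaFinite {η : Measure ℝ} {r : ℝ}
    (h : ∫⁻ u in Set.Ioi (0:ℝ), ENNReal.ofReal (Real.exp (-1 * u)) ∂η = ENNReal.ofReal r) :
    SigmaFinite (η.restrict (Set.Ioi 0)) := by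
  apply Measure.sigmaFinite_of_countable
    (S := Set.range fun n : ℕ => Set.Iic ((n:ℝ)+1)) (countable_range _)
  · rintro s ⟨n, rfl⟩
    rw [Measure.restrict_apply measurableSet_Iic]
    set A := Set.Iic ((n:ℝ)+1) ∩ Set.Ioi 0 with hA
    have step1 : ENNReal.ofReal (Real.exp (-((n:ℝ)+1))) * η A
        ≤ ∫⁻ u in A, ENNReal.ofReal (Real.exp (-1*u)) ∂η := by
      rw [← setLIntegral_const]
      refine setLIntegral_mono' (measurableSet_Iic.inter measurableSet_Ioi) fun u hu => ?_
      exact ENNReal.ofReal_le_ofReal (Real.exp_le_exp.2 (by have := hu.1; simp only [Set.mem_Iic] at this; linarith))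
    have step2 : (∫⁻ u in A, ENNReal.ofReal (Real.exp (-1*u)) ∂η)
        ≤ ∫⁻ u in Set.Ioi (0:ℝ), ENNReal.ofReal (Real.exp (-1*u)) ∂η :=
      lintegral_mono_set Set.inter_subset_right
    have hle : ENNReal.ofReal (Real.exp (-((n:ℝ)+1))) * η A ≤ ENNReal.ofReal r := by
      rw [← h]; exact step1.trans step2
    rcases eq_top_or_lt_top (η A) with htop | hfin
    · exfalso
      rw [htop, ENNReal.mul_top (ENNReal.ofReal_pos.mpr (Real.exp_pos _)).ne'] at hle
      exact (lt_irrefl _ (hle.trans_lt ENNReal.ofReal_lt_top)).elim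
    · exact hfin
  · ext x
    simp only [Set.mem_sUnion, Set.mem_range, Set.mem_univ, iff_true]
    obtain ⟨n, hn⟩ := exists_nat_ge x
    exact ⟨Set.Iic ((n:ℝ)+1), ⟨n, rfl⟩, by simp only [Set.mem_Iic]; linarith⟩

/-- Integrability of `x^{γ-1} e^{-b x^p}` on `(0,∞)` for any `p > 0`. -/
lemma my_integrableOn {γ p b : ℝ} (hγ : 0 < γ) (hp : 0 < p) (hb : 0 < b) :
    IntegrableOn (fun x : ℝ => x ^ (γ - 1) * Real.exp (-b * x ^ p)) (Set.Ioi 0) := by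
  have hf : IntegrableOn (fun y : ℝ => y ^ (γ/p - 1) * Real.exp (-b * y)) (Set.Ioi 0) := by
    have h := integrableOn_rpow_mul_exp_neg_mul_rpow
      (s := γ/p - 1) (by nlinarith [div_pos hγ hp]) (by norm_num : (0:ℝ) < 1) hb
    refine h.congr_fun (fun x hx => by simp only [Real.rpow_one]) measurableSet_Ioi
  have h1 := (integrableOn_Ioi_comp_rpow_iff
    (fun y => y ^ (γ/p - 1) * Real.exp (-b * y)) hp.ne').mpr hf
  have h2 : IntegrableOn (fun x : ℝ =>
      (1/p) * ((|p| * x ^ (p-1)) • ((x^p) ^ (γ/p - 1) * Real.exp (-b * x^p)))) (Set.Ioi 0) :=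
    h1.const_mul _
  refine h2.congr_fun (fun x hx => ?_) measurableSet_Ioi
  have hx0 : (0:ℝ) < x := hx
  dsimp only
  rw [smul_eq_mul, abs_of_pos hp, ← Real.rpow_mul hx0.le, ← mul_assoc, ← mul_assoc]
  rw [show (1/p) * (p * x ^ (p-1)) = x ^ (p-1) from by field_simp]
  rw [mul_assoc, ← mul_assoc (x ^ (p-1)), ← Real.rpow_add hx0]
  rw [show p - 1 + p * (γ/p - 1) = γ - 1 from by field_simp; ring]

set_option maxHeartbeats 1000000 in
/-- For Φ nondecreasing on (0,∞), positive, with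
`Φ(λ) ≥ C₁ λ^{α/2}` near zero and `Φ(λ)/log λ → ∞`, for every `γ > 0` and `t₀ > 0`
there is `C̃ > 0` such that for every `t ≥ t₀` and every Borel measure η on (0,∞)
whose Laplace transform is `e^{-tΦ(λ)}`, one has `∫ u^{-γ} η(du) ≤ C̃ t^{-2γ/α}`. -/
theorem stmt1 (Φ : ℝ → ℝ) (α C₁ lam₀ : ℝ)
    (hα : 0 < α) (hα2 : α ≤ 2) (hC₁ : 0 < C₁) (hlam₀ : 0 < lam₀)
    (hmono : MonotoneOn Φ (Set.Ioi (0:ℝ))) (hpos : ∀ l > (0:ℝ), 0 < Φ l)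
    (hlow : ∀ l : ℝ, 0 < l → l < lam₀ → C₁ * l ^ (α/2) ≤ Φ l)
    (hlim : Tendsto (fun l => Φ l / Real.log l) atTop atTop) :
    ∀ γ > (0:ℝ), ∀ t₀ > (0:ℝ), ∃ C > (0:ℝ), ∀ t ≥ t₀, ∀ η : Measure ℝ,
      (∀ l > (0:ℝ),
        ∫⁻ u in Set.Ioi (0:ℝ), ENNReal.ofReal (Real.exp (-l * u)) ∂η
          = ENNReal.ofReal (Real.exp (-t * Φ l))) →
      ∫⁻ u in Set.Ioi (0:ℝ), ENNReal.ofReal (u ^ (-γ)) ∂η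
        ≤ ENNReal.ofReal (C * t ^ (-(2*γ)/α)) := by
  intro γ hγ t₀ ht₀
  have hαne : α ≠ 0 := hα.ne'
  obtain ⟨a, ha⟩ := eventually_atTop.mp (hlim.eventually_ge_atTop (2*(γ+2)/t₀))
  set lam₁ : ℝ := max a (max (lam₀+1) 2) with hlam₁def
  have hlam₁2 : (2:ℝ) ≤ lam₁ := le_max_of_le_right (le_max_right _ _)
  have hlam₁lam₀ : lam₀ + 1 ≤ lam₁ := le_max_of_le_right (le_max_left _ _)
  have hlam₁pos : 0 < lam₁ := by linarith
  have hlam₀lam₁ : lam₀ ≤ lam₁ := by linarith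
  have hlog : ∀ l, lam₁ ≤ l → (γ+2) * Real.log l ≤ (t₀/2) * Φ l := by
    intro l hl
    have hl2 : (2:ℝ) ≤ l := le_trans hlam₁2 hl
    have hlogpos : 0 < Real.log l := Real.log_pos (by linarith)
    have h1 := ha l (le_trans (le_max_left _ _) hl)
    rw [le_div_iff₀ hlogpos] at h1
    have h2 : (t₀/2) * (2*(γ+2)/t₀ * Real.log l) ≤ (t₀/2) * Φ l :=
      mul_le_mul_of_nonneg_left h1 (by linarith)
    calc (γ+2) * Real.log l = (t₀/2) * (2*(γ+2)/t₀ * Real.log l) := by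
          field_simp
      _ ≤ (t₀/2) * Φ l := h2
  set c : ℝ := Φ lam₀ with hcdef
  have hc : 0 < c := hpos lam₀ hlam₀
  obtain ⟨D, hD, hDle⟩ := my_expPolyBound (half_pos hc) (q := 2*γ/α) (by positivity) ht₀
  set e : ℝ := -(2*γ)/α with hedef
  have hee : -(γ - 1 + 1)/(α/2) = e := by rw [hedef, div_div_eq_mul_div]; ring
  have hqq : (γ - 1 + 1)/(α/2) = 2*γ/α := by field_simp; ring
  set B : ℝ := max (lam₀ ^ (γ-1)) (lam₁ ^ (γ-1)) with hBdef
  have hB : 0 < B := lt_max_of_lt_left (Real.rpow_pos_of_pos hlam₀ _)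
  set K₂ : ℝ := ∫ x in Set.Ioi (lam₁/2), x ^ (-3:ℝ) with hK₂def
  have hK₂ : 0 ≤ K₂ := setIntegral_nonneg measurableSet_Ioi fun x hx =>
    Real.rpow_nonneg (le_of_lt (lt_trans (by linarith) (Set.mem_Ioi.mp hx))) _
  set A₁ : ℝ := C₁ ^ e * (1/(α/2)) * Real.Gamma (2*γ/α) with hA₁def
  have hA₁ : 0 < A₁ := by
    have hΓ := Real.Gamma_pos_of_pos (show 0 < 2*γ/α by positivity)
    have hCe := Real.rpow_pos_of_pos hC₁ e
    rw [hA₁def]; positivity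
  set E : ℝ := A₁ + D * (B * (lam₁ - lam₀) + K₂) with hEdef
  have hE : 0 < E := by
    rw [hEdef]
    have n : 0 ≤ D * (B * (lam₁ - lam₀) + K₂) :=
      mul_nonneg hD.le (add_nonneg (mul_nonneg hB.le (by linarith)) hK₂)
    linarith
  have hG : (0:ℝ) < Real.Gamma γ := Real.Gamma_pos_of_pos hγ
  refine ⟨E / Real.Gamma γ, div_pos hE hG, ?_⟩
  intro t ht η hη
  have ht0 : 0 < t := lt_of_lt_of_le ht₀ ht
  have hte0 : 0 ≤ t ^ e := Real.rpow_nonneg ht0.le e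
  haveI : SigmaFinite (η.restrict (Set.Ioi 0)) := my_sigmaFinite (hη 1 one_pos)
  have hfm : Measurable (Function.uncurry fun (u l : ℝ) =>
      ENNReal.ofReal (l ^ (γ-1) * Real.exp (-l * u))) := by fun_prop
  have key : ENNReal.ofReal (Real.Gamma γ) * (∫⁻ u in Set.Ioi (0:ℝ), ENNReal.ofReal (u ^ (-γ)) ∂η)
      = ∫⁻ l in Set.Ioi (0:ℝ),
          ENNReal.ofReal (l ^ (γ-1)) * ENNReal.ofReal (Real.exp (-t * Φ l)) := by
    rw [← lintegral_const_mul' _ _ ENNReal.ofReal_ne_top]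
    calc ∫⁻ u in Set.Ioi (0:ℝ), ENNReal.ofReal (Real.Gamma γ) * ENNReal.ofReal (u ^ (-γ)) ∂η
        = ∫⁻ u in Set.Ioi (0:ℝ), ∫⁻ l in Set.Ioi (0:ℝ),
            ENNReal.ofReal (l ^ (γ-1) * Real.exp (-l * u)) ∂volume ∂η := by
          refine setLIntegral_congr_fun measurableSet_Ioi (fun u hu => ?_)
          exact my_gammaRep hγ (Set.mem_Ioi.mp hu)
      _ = ∫⁻ l in Set.Ioi (0:ℝ), ∫⁻ u in Set.Ioi (0:ℝ),
            ENNReal.ofReal (l ^ (γ-1) * Real.exp (-l * u)) ∂η ∂volume :=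
          lintegral_lintegral_swap hfm.aemeasurable
      _ = _ := by
          refine setLIntegral_congr_fun measurableSet_Ioi (fun l hl => ?_)
          have hl0 : (0:ℝ) < l := Set.mem_Ioi.mp hl
          calc ∫⁻ u in Set.Ioi (0:ℝ), ENNReal.ofReal (l ^ (γ-1) * Real.exp (-l * u)) ∂η
              = ∫⁻ u in Set.Ioi (0:ℝ),
                  ENNReal.ofReal (l ^ (γ-1)) * ENNReal.ofReal (Real.exp (-l * u)) ∂η :=
                lintegral_congr fun u => ENNReal.ofReal_mul (Real.rpow_nonneg hl0.le _)
            _ = ENNReal.ofReal (l ^ (γ-1)) * ENNReal.ofReal (Real.exp (-t * Φ l)) := by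
                rw [lintegral_const_mul' _ _ ENNReal.ofReal_ne_top, hη l hl0]
  -- part 1
  have hint1 : IntegrableOn (fun x : ℝ => x ^ (γ - 1) * Real.exp (-(t*C₁) * x ^ (α/2)))
      (Set.Ioi 0) := my_integrableOn hγ (by positivity) (by positivity)
  have hnn1 : 0 ≤ᵐ[volume.restrict (Set.Ioi (0:ℝ))]
      fun x : ℝ => x ^ (γ - 1) * Real.exp (-(t*C₁) * x ^ (α/2)) := by
    filter_upwards [ae_restrict_mem measurableSet_Ioi] with x hx
    have hx0 : (0:ℝ) < x := hx
    positivity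
  have hpart1 : (∫⁻ l in Set.Ioo 0 lam₀,
      ENNReal.ofReal (l ^ (γ-1)) * ENNReal.ofReal (Real.exp (-t * Φ l)))
      ≤ ENNReal.ofReal (A₁ * t ^ e) := by
    have hmaj : ∀ l ∈ Set.Ioo (0:ℝ) lam₀,
        ENNReal.ofReal (l ^ (γ-1)) * ENNReal.ofReal (Real.exp (-t * Φ l))
          ≤ ENNReal.ofReal (l ^ (γ-1) * Real.exp (-(t*C₁) * l ^ (α/2))) := by
      intro l hl
      rw [← ENNReal.ofReal_mul (Real.rpow_nonneg hl.1.le _)]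
      apply ENNReal.ofReal_le_ofReal
      have h1 := hlow l hl.1 hl.2
      have h2 : t * (C₁ * l ^ (α/2)) ≤ t * Φ l := mul_le_mul_of_nonneg_left h1 ht0.le
      have h3 : Real.exp (-t * Φ l) ≤ Real.exp (-(t*C₁) * l ^ (α/2)) := by
        apply Real.exp_le_exp.2; nlinarith
      exact mul_le_mul_of_nonneg_left h3 (Real.rpow_nonneg hl.1.le _)
    calc (∫⁻ l in Set.Ioo 0 lam₀,
        ENNReal.ofReal (l ^ (γ-1)) * ENNReal.ofReal (Real.exp (-t * Φ l)))
        ≤ ∫⁻ l in Set.Ioo 0 lam₀,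
            ENNReal.ofReal (l ^ (γ-1) * Real.exp (-(t*C₁) * l ^ (α/2))) :=
          setLIntegral_mono' measurableSet_Ioo hmaj
      _ ≤ ∫⁻ l in Set.Ioi 0,
            ENNReal.ofReal (l ^ (γ-1) * Real.exp (-(t*C₁) * l ^ (α/2))) :=
          lintegral_mono_set Set.Ioo_subset_Ioi_self
      _ = ENNReal.ofReal (∫ l in Set.Ioi (0:ℝ), l ^ (γ-1) * Real.exp (-(t*C₁) * l ^ (α/2))) :=
          (ofReal_integral_eq_lintegral_ofReal hint1 hnn1).symm
      _ = ENNReal.ofReal ((t*C₁) ^ (-(γ-1+1)/(α/2)) * (1/(α/2)) * Real.Gamma ((γ-1+1)/(α/2))) := by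
          rw [integral_rpow_mul_exp_neg_mul_rpow (by positivity) (by linarith) (by positivity)]
      _ ≤ ENNReal.ofReal (A₁ * t ^ e) := by
          apply ENNReal.ofReal_le_ofReal
          apply le_of_eq
          rw [hee, hqq, Real.mul_rpow ht0.le hC₁.le, hA₁def]
          ring
  -- part 2a
  have hpart2a : (∫⁻ l in Set.Ico lam₀ lam₁,
      ENNReal.ofReal (l ^ (γ-1)) * ENNReal.ofReal (Real.exp (-t * Φ l)))
      ≤ ENNReal.ofReal ((Real.exp (-(c/2 * t)) * B) * (lam₁ - lam₀)) := by
    have hmaj : ∀ l ∈ Set.Ico lam₀ lam₁,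
        ENNReal.ofReal (l ^ (γ-1)) * ENNReal.ofReal (Real.exp (-t * Φ l))
          ≤ ENNReal.ofReal (Real.exp (-(c/2 * t)) * B) := by
      intro l hl
      have hl0 : 0 < l := lt_of_lt_of_le hlam₀ hl.1
      rw [← ENNReal.ofReal_mul (Real.rpow_nonneg hl0.le _)]
      apply ENNReal.ofReal_le_ofReal
      have hΦ : c ≤ Φ l := hmono (Set.mem_Ioi.2 hlam₀) (Set.mem_Ioi.2 hl0) hl.1
      have hexp : Real.exp (-t * Φ l) ≤ Real.exp (-(c/2 * t)) := by
        apply Real.exp_le_exp.2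
        nlinarith [mul_le_mul_of_nonneg_left hΦ ht0.le, mul_pos hc ht0]
      have hpow : l ^ (γ-1) ≤ B := by
        rcases le_or_gt 0 (γ-1) with hγ1 | hγ1
        · exact le_max_of_le_right (Real.rpow_le_rpow hl0.le hl.2.le hγ1)
        · exact le_max_of_le_left (Real.rpow_le_rpow_of_nonpos hlam₀ hl.1 hγ1.le)
      calc l ^ (γ-1) * Real.exp (-t * Φ l) ≤ B * Real.exp (-(c/2 * t)) :=
            mul_le_mul hpow hexp (Real.exp_nonneg _) hB.le
        _ = Real.exp (-(c/2 * t)) * B := by ring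
    calc (∫⁻ l in Set.Ico lam₀ lam₁,
        ENNReal.ofReal (l ^ (γ-1)) * ENNReal.ofReal (Real.exp (-t * Φ l)))
        ≤ ∫⁻ _ in Set.Ico lam₀ lam₁, ENNReal.ofReal (Real.exp (-(c/2 * t)) * B) :=
          setLIntegral_mono' measurableSet_Ico hmaj
      _ = ENNReal.ofReal (Real.exp (-(c/2 * t)) * B) * volume (Set.Ico lam₀ lam₁) :=
          setLIntegral_const _ _
      _ = ENNReal.ofReal ((Real.exp (-(c/2 * t)) * B) * (lam₁ - lam₀)) := by
          rw [Real.volume_Ico, ← ENNReal.ofReal_mul (by positivity)]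
  -- part 2b
  have hint2 : IntegrableOn (fun x : ℝ => x ^ (-3:ℝ)) (Set.Ioi (lam₁/2)) :=
    integrableOn_Ioi_rpow_of_lt (by norm_num) (by linarith)
  have hpart2b : (∫⁻ l in Set.Ici lam₁,
      ENNReal.ofReal (l ^ (γ-1)) * ENNReal.ofReal (Real.exp (-t * Φ l)))
      ≤ ENNReal.ofReal (Real.exp (-(c/2 * t)) * K₂) := by
    have hmaj : ∀ l ∈ Set.Ici lam₁,
        ENNReal.ofReal (l ^ (γ-1)) * ENNReal.ofReal (Real.exp (-t * Φ l))
          ≤ ENNReal.ofReal (Real.exp (-(c/2 * t))) * ENNReal.ofReal (l ^ (-3:ℝ)) := by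
      intro l hl
      have hl0 : 0 < l := lt_of_lt_of_le hlam₁pos hl
      rw [← ENNReal.ofReal_mul (Real.rpow_nonneg hl0.le _),
        ← ENNReal.ofReal_mul (Real.exp_nonneg _)]
      apply ENNReal.ofReal_le_ofReal
      have hΦ : c ≤ Φ l := hmono (Set.mem_Ioi.2 hlam₀) (Set.mem_Ioi.2 hl0) (le_trans hlam₀lam₁ hl)
      have hΦ0 : 0 < Φ l := hpos l hl0
      have hlg := hlog l hl
      have hkey : c/2 * t + (γ+2) * Real.log l ≤ t * Φ l := by
        have h1 : t/2 * c ≤ t/2 * Φ l := mul_le_mul_of_nonneg_left hΦ (by linarith)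
        have h2 : t₀/2 * Φ l ≤ t/2 * Φ l := mul_le_mul_of_nonneg_right (by linarith) hΦ0.le
        nlinarith
      have hexp : Real.exp (-t * Φ l) ≤ Real.exp (-(c/2 * t)) * l ^ (-(γ+2)) := by
        rw [Real.rpow_def_of_pos hl0, ← Real.exp_add]
        apply Real.exp_le_exp.2
        nlinarith [hkey]
      calc l ^ (γ-1) * Real.exp (-t * Φ l)
          ≤ l ^ (γ-1) * (Real.exp (-(c/2 * t)) * l ^ (-(γ+2))) :=
            mul_le_mul_of_nonneg_left hexp (Real.rpow_nonneg hl0.le _)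
        _ = Real.exp (-(c/2 * t)) * (l ^ (γ-1) * l ^ (-(γ+2))) := by ring
        _ = Real.exp (-(c/2 * t)) * l ^ (-3:ℝ) := by
            rw [← Real.rpow_add hl0]
            congr 1
            ring
    calc (∫⁻ l in Set.Ici lam₁,
        ENNReal.ofReal (l ^ (γ-1)) * ENNReal.ofReal (Real.exp (-t * Φ l)))
        ≤ ∫⁻ l in Set.Ici lam₁,
            ENNReal.ofReal (Real.exp (-(c/2 * t))) * ENNReal.ofReal (l ^ (-3:ℝ)) :=
          setLIntegral_mono' measurableSet_Ici hmaj
      _ = ENNReal.ofReal (Real.exp (-(c/2 * t)))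
            * ∫⁻ l in Set.Ici lam₁, ENNReal.ofReal (l ^ (-3:ℝ)) :=
          lintegral_const_mul' _ _ ENNReal.ofReal_ne_top
      _ ≤ ENNReal.ofReal (Real.exp (-(c/2 * t)))
            * ∫⁻ l in Set.Ioi (lam₁/2), ENNReal.ofReal (l ^ (-3:ℝ)) := by
          refine mul_le_mul_right (lintegral_mono_set ?_) _
          intro x hx
          exact lt_of_lt_of_le (by linarith : lam₁/2 < lam₁) hx
      _ = ENNReal.ofReal (Real.exp (-(c/2 * t))) * ENNReal.ofReal K₂ := by
          rw [hK₂def, ofReal_integral_eq_lintegral_ofReal hint2 ?_]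
          filter_upwards [ae_restrict_mem measurableSet_Ioi] with x hx
          exact Real.rpow_nonneg (le_of_lt (lt_trans (by linarith) (Set.mem_Ioi.mp hx))) _
      _ = ENNReal.ofReal (Real.exp (-(c/2 * t)) * K₂) :=
          (ENNReal.ofReal_mul (Real.exp_nonneg _)).symm
  -- combine
  have hte : t ^ e = t ^ (-(2*γ/α)) := by rw [hedef, neg_div]
  have hexp2 : Real.exp (-(c/2 * t)) ≤ D * t ^ e := by rw [hte]; exact hDle t ht
  have hsum : (∫⁻ l in Set.Ioi (0:ℝ),
      ENNReal.ofReal (l ^ (γ-1)) * ENNReal.ofReal (Real.exp (-t * Φ l)))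
      ≤ ENNReal.ofReal (E * t ^ e) := by
    have hu1 : Set.Ioi (0:ℝ) = Set.Ioo 0 lam₀ ∪ Set.Ici lam₀ :=
      (Set.Ioo_union_Ici_eq_Ioi hlam₀).symm
    have hu2 : Set.Ici lam₀ = Set.Ico lam₀ lam₁ ∪ Set.Ici lam₁ :=
      (Set.Ico_union_Ici_eq_Ici hlam₀lam₁).symm
    have n2 : (0:ℝ) ≤ (D * t ^ e * B) * (lam₁ - lam₀) :=
      mul_nonneg (mul_nonneg (mul_nonneg hD.le hte0) hB.le) (by linarith)
    have n3 : (0:ℝ) ≤ D * t ^ e * K₂ := mul_nonneg (mul_nonneg hD.le hte0) hK₂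
    calc (∫⁻ l in Set.Ioi (0:ℝ),
        ENNReal.ofReal (l ^ (γ-1)) * ENNReal.ofReal (Real.exp (-t * Φ l)))
        ≤ (∫⁻ l in Set.Ioo 0 lam₀,
            ENNReal.ofReal (l ^ (γ-1)) * ENNReal.ofReal (Real.exp (-t * Φ l)))
          + ((∫⁻ l in Set.Ico lam₀ lam₁,
              ENNReal.ofReal (l ^ (γ-1)) * ENNReal.ofReal (Real.exp (-t * Φ l)))
            + (∫⁻ l in Set.Ici lam₁,
              ENNReal.ofReal (l ^ (γ-1)) * ENNReal.ofReal (Real.exp (-t * Φ l)))) := by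
          rw [hu1]
          refine (lintegral_union_le _ _ _).trans (add_le_add_right ?_ _)
          rw [hu2]
          exact lintegral_union_le _ _ _
      _ ≤ ENNReal.ofReal (A₁ * t ^ e)
          + (ENNReal.ofReal ((D * t ^ e * B) * (lam₁ - lam₀))
            + ENNReal.ofReal (D * t ^ e * K₂)) := by
          refine add_le_add hpart1 (add_le_add (hpart2a.trans ?_) (hpart2b.trans ?_))
          · apply ENNReal.ofReal_le_ofReal
            exact mul_le_mul_of_nonneg_right
              (mul_le_mul_of_nonneg_right hexp2 hB.le) (by linarith)
          · exact ENNReal.ofReal_le_ofReal (mul_le_mul_of_nonneg_right hexp2 hK₂)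
      _ = ENNReal.ofReal (A₁ * t ^ e
          + ((D * t ^ e * B) * (lam₁ - lam₀) + D * t ^ e * K₂)) := by
          rw [← ENNReal.ofReal_add n2 n3,
            ← ENNReal.ofReal_add (mul_nonneg hA₁.le hte0) (add_nonneg n2 n3)]
      _ ≤ ENNReal.ofReal (E * t ^ e) := ENNReal.ofReal_le_ofReal (le_of_eq (by rw [hEdef]; ring))
  have hfinal : ENNReal.ofReal (Real.Gamma γ)
      * (∫⁻ u in Set.Ioi (0:ℝ), ENNReal.ofReal (u ^ (-γ)) ∂η)
      ≤ ENNReal.ofReal (E * t ^ e) := key.le.trans hsum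
  have goalC : E / Real.Gamma γ * t ^ e = (E * t ^ e) / Real.Gamma γ := by ring
  rw [goalC, ENNReal.ofReal_div_of_pos hG,
    ENNReal.le_div_iff_mul_le (Or.inl (ENNReal.ofReal_pos.mpr hG).ne')
      (Or.inl ENNReal.ofReal_ne_top), mul_comm]
  exact hfinal
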